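/- (Maximal Ergodic Theorem) Let φ : X → X be a measurable bijection, μ a φ-invariant probability measure on X, f ∈ L¹(X,μ), and S_n(x) = f(x) + f(φ(x)) + ⋯ + f(φ^{n−1}(x)). For α ∈ ℝ, set E = { x ∈ X : sup_n S_n(x)/n > α }. Then ∫_E f dμ ≥ α·μ(E). -/

import Mathlib

open MeasureTheory

/-- Running maxima of a sequence of functions, starting at `0`. -/
noncomputable def maxErgM {X : Type*} (T : ℕ → X → ℝ) : ℕ → X → ℝ
  | 0 => fun _ => 0
  | (N + 1) => fun x => max (maxErgM T N x) (T (N + 1) x)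

lemma maxErgM_nonneg {X : Type*} (T : ℕ → X → ℝ) (N : ℕ) (x : X) : 0 ≤ maxErgM T N x := by
  induction N with
  | zero => simp [maxErgM]
  | succ N ih => exact le_max_of_le_left ih

lemma maxErgM_mono {X : Type*} (T : ℕ → X → ℝ) {N N' : ℕ} (h : N ≤ N') (x : X) :
    maxErgM T N x ≤ maxErgM T N' x := by
  induction N' with
  | zero => simpa [Nat.le_zero.mp h]
  | succ N' ih =>
    rcases Nat.lt_or_ge N (N' + 1) with h' | h'
    · exact le_max_of_le_left (ih (Nat.lt_succ_iff.mp h'))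
    · have : N = N' + 1 := le_antisymm h h'
      simp [this]

lemma maxErgT_le_M {X : Type*} (T : ℕ → X → ℝ) (hT0 : ∀ x, T 0 x = 0) {n N : ℕ} (h : n ≤ N)
    (x : X) : T n x ≤ maxErgM T N x := by
  have : T n x ≤ maxErgM T n x := by
    cases n with
    | zero => simp [maxErgM, hT0]
    | succ n => exact le_max_right _ _
  exact this.trans (maxErgM_mono T h x)

lemma maxErgM_attained {X : Type*} (T : ℕ → X → ℝ) (N : ℕ) (x : X)
    (h : 0 < maxErgM T N x) : ∃ n, 0 < n ∧ n ≤ N ∧ maxErgM T N x ≤ T n x := by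
  induction N with
  | zero => simp [maxErgM] at h
  | succ N ih =>
    rcases le_total (T (N + 1) x) (maxErgM T N x) with h1 | h1
    · have hM : maxErgM T (N + 1) x = maxErgM T N x := max_eq_left h1
      rw [hM] at h ⊢
      obtain ⟨n, hn0, hnN, hle⟩ := ih h
      exact ⟨n, hn0, hnN.trans (Nat.le_succ N), hle⟩
    · exact ⟨N + 1, Nat.succ_pos N, le_rfl, max_le h1 le_rfl⟩

/-- The maximal ergodic theorem, basic form. -/
lemma maxErg_main {X : Type*} [MeasurableSpace X] (μ : Measure X) [IsProbabilityMeasure μ]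
    (φ : X → X) (hφ : MeasurePreserving φ μ μ)
    (g : X → ℝ) (hg : Measurable g) (hgi : Integrable g μ) :
    0 ≤ ∫ x in {x | ∃ n : ℕ, 0 < n ∧ 0 < ∑ i ∈ Finset.range n, g (φ^[i] x)}, g x ∂μ := by
  set T : ℕ → X → ℝ := fun n x => ∑ i ∈ Finset.range n, g (φ^[i] x) with hTdef
  have hT0 : ∀ x, T 0 x = 0 := by simp [hTdef]
  have hTrec : ∀ n x, T (n + 1) x = g x + T n (φ x) := by
    intro n x
    simp only [hTdef]
    rw [Finset.sum_range_succ']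
    simp only [Function.iterate_succ_apply, Function.iterate_zero_apply]
    ring
  have hTmeas : ∀ n, Measurable (T n) := fun n =>
    Finset.measurable_sum _ fun i _ => hg.comp (hφ.measurable.iterate i)
  have hTint : ∀ n, Integrable (T n) μ := fun n =>
    integrable_finset_sum _ fun i _ =>
      ((hφ.iterate i).integrable_comp hgi.aestronglyMeasurable).2 hgi
  set M : ℕ → X → ℝ := maxErgM T with hMdef
  have hMmeas : ∀ N, Measurable (M N) := by
    intro N
    induction N with
    | zero => exact measurable_const
    | succ N ih => exact ih.max (hTmeas (N + 1))
  have hMint : ∀ N, Integrable (M N) μ := by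
    intro N
    induction N with
    | zero => exact integrable_const 0
    | succ N ih => exact ih.sup (hTint (N + 1))
  have hMφint : ∀ N, Integrable (fun x => M N (φ x)) μ := fun N =>
    (hφ.integrable_comp (hMint N).aestronglyMeasurable).2 (hMint N)
  set A : ℕ → Set X := fun N => {x | 0 < M N x} with hAdef
  have hAmeas : ∀ N, MeasurableSet (A N) := fun N =>
    measurableSet_lt measurable_const (hMmeas N)
  have hAmono : Monotone A := fun N N' h x hx => lt_of_lt_of_le hx (maxErgM_mono T h x)
  have hAunion : ⋃ N, A N = {x | ∃ n : ℕ, 0 < n ∧ 0 < T n x} := by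
    ext x
    simp only [Set.mem_iUnion, hAdef, Set.mem_setOf_eq]
    constructor
    · rintro ⟨N, hN⟩
      obtain ⟨n, hn0, _, hle⟩ := maxErgM_attained T N x hN
      exact ⟨n, hn0, lt_of_lt_of_le hN hle⟩
    · rintro ⟨n, hn0, hTn⟩
      exact ⟨n, lt_of_lt_of_le hTn (maxErgT_le_M T hT0 le_rfl x)⟩
  have key : ∀ N, ∀ x ∈ A N, M N x - M N (φ x) ≤ g x := by
    intro N x hx
    obtain ⟨n, hn0, hnN, hle⟩ := maxErgM_attained T N x hx
    obtain ⟨m, rfl⟩ := Nat.exists_eq_succ_of_ne_zero hn0.ne'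
    have h1 : T m (φ x) ≤ M N (φ x) :=
      maxErgT_le_M T hT0 (Nat.le_of_succ_le_succ (hnN.trans (Nat.le_succ N))) (φ x)
    have h2 := hTrec m x
    linarith
  have setint : ∀ N, 0 ≤ ∫ x in A N, g x ∂μ := by
    intro N
    have e1 : ∫ x in A N, (M N x - M N (φ x)) ∂μ ≤ ∫ x in A N, g x ∂μ :=
      setIntegral_mono_on (((hMint N).sub (hMφint N)).integrableOn)
        hgi.integrableOn (hAmeas N) (key N)
    have e2 : ∫ x in A N, (M N x - M N (φ x)) ∂μ =
        (∫ x in A N, M N x ∂μ) - ∫ x in A N, M N (φ x) ∂μ :=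
      integral_sub ((hMint N).integrableOn) ((hMφint N).integrableOn)
    have e3 : ∫ x, M N x ∂μ = ∫ x in A N, M N x ∂μ := by
      rw [← integral_indicator (hAmeas N)]
      congr 1
      funext x
      by_cases hx : x ∈ A N
      · simp [hx]
      · rw [Set.indicator_of_notMem hx]
        exact le_antisymm (not_lt.mp hx) (maxErgM_nonneg T N x)
    have e4 : ∫ x in A N, M N (φ x) ∂μ ≤ ∫ x, M N (φ x) ∂μ :=
      setIntegral_le_integral (hMφint N) (ae_of_all _ fun x => maxErgM_nonneg T N (φ x))
    have e5 : ∫ x, M N (φ x) ∂μ = ∫ x, M N x ∂μ := by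
      rw [← integral_map hφ.measurable.aemeasurable, hφ.map_eq]
      rw [hφ.map_eq]
      exact (hMmeas N).aestronglyMeasurable
    linarith
  have htend := tendsto_setIntegral_of_monotone hAmeas hAmono
    (hgi.integrableOn : IntegrableOn g (⋃ N, A N) μ)
  rw [hAunion] at htend
  exact ge_of_tendsto' htend setint

theorem stmt14 {X : Type*} [MeasurableSpace X] (μ : Measure X) [IsProbabilityMeasure μ]
    (φ : X → X) (hbij : Function.Bijective φ) (hφ : MeasurePreserving φ μ μ)
    (f : X → ℝ) (hf : Measurable f) (hfi : Integrable f μ)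
    (S : ℕ → X → ℝ) (hS : ∀ n x, S n x = ∑ i ∈ Finset.range n, f (φ^[i] x))
    (α : ℝ) :
    α * (μ {x | ∃ n : ℕ, 0 < n ∧ α < S n x / n}).toReal ≤
      ∫ x in {x | ∃ n : ℕ, 0 < n ∧ α < S n x / n}, f x ∂μ := by
  set g : X → ℝ := fun x => f x - α with hgdef
  have hg : Measurable g := hf.sub measurable_const
  have hgi : Integrable g μ := hfi.sub (integrable_const α)
  have hsets : {x : X | ∃ n : ℕ, 0 < n ∧ α < S n x / n} =
      {x | ∃ n : ℕ, 0 < n ∧ 0 < ∑ i ∈ Finset.range n, g (φ^[i] x)} := by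
    ext x
    simp only [Set.mem_setOf_eq]
    constructor <;> rintro ⟨n, hn, h⟩ <;> refine ⟨n, hn, ?_⟩
    · have hsum : ∑ i ∈ Finset.range n, g (φ^[i] x) = S n x - n * α := by
        simp [hgdef, Finset.sum_sub_distrib, hS n x, mul_comm]
      rw [hsum, sub_pos]
      calc (n : ℝ) * α < n * (S n x / n) := by
            exact mul_lt_mul_of_pos_left h (by exact_mod_cast hn)
        _ = S n x := by field_simp
    · have hsum : ∑ i ∈ Finset.range n, g (φ^[i] x) = S n x - n * α := by
        simp [hgdef, Finset.sum_sub_distrib, hS n x, mul_comm]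
      rw [hsum, sub_pos] at h
      rw [lt_div_iff₀ (by exact_mod_cast hn)]
      linarith
  rw [hsets]
  set E := {x : X | ∃ n : ℕ, 0 < n ∧ 0 < ∑ i ∈ Finset.range n, g (φ^[i] x)}
  have h0 := maxErg_main μ φ hφ g hg hgi
  have hint : ∫ x in E, g x ∂μ = (∫ x in E, f x ∂μ) - (μ E).toReal * α := by
    rw [hgdef]
    rw [integral_sub hfi.integrableOn
      (integrableOn_const (measure_lt_top μ E).ne)]
    simp [mul_comm, Measure.real]
  rw [hint] at h0
  linarith
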